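/- arXiv:2502.11226 — 3 statements merged into one kernel-verified Lean document; each statement's English description precedes it below -/
import Mathlib

section
/- Let E be a finite directed graph and T_E its talented monoid. Then every element x ∈ T_E can be written as x = Σ_{i=1}^n v_i(n_i) where each n_i ∈ ℤ and each vertex v_i is either a sink of E or lies on a cycle of E. -/
/-! Directed graphs are given by types `V` (vertices), `E` (edges) and maps
`s r : E → V` (source and range). -/

/-- `PathTo s r u v l` : the list of edges `l` is a path from `u` to `v`
(the empty list is the trivial path at `u = v`). -/
inductive PathTo {V E : Type*} (s r : E → V) : V → V → List E → Prop
  | nil (v : V) : PathTo s r v v []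
  | cons (e : E) {w : V} {l : List E} :
      PathTo s r (r e) w l → PathTo s r (s e) w (e :: l)

variable {V E : Type*}

/-- `u ≥ v` : there is a finite path from `u` to `v`. -/
def Reach (s r : E → V) (u v : V) : Prop := ∃ l : List E, PathTo s r u v l

/-- A subset of vertices is hereditary if it is closed under ranges of edges. -/
def Hereditary (s r : E → V) (H : Set V) : Prop := ∀ e : E, s e ∈ H → r e ∈ H

/-- A subset of vertices is saturated if it contains every regular vertex all of
whose out-neighbours lie in the set. -/
def Saturated (s r : E → V) (H : Set V) : Prop :=
  ∀ v : V, (∃ e, s e = v) → (∀ e, s e = v → r e ∈ H) → v ∈ H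

/-- `R(H)` : the set of vertices from which there is a finite path into `H`. -/
def ReachSet (s r : E → V) (H : Set V) : Set V := {u : V | ∃ v ∈ H, Reach s r u v}

/-- `T(w)` : the tree rooted at `w`, i.e. the set of vertices reachable from `w`. -/
def TreeOf (s r : E → V) (w : V) : Set V := {v : V | Reach s r w v}

/-- `H^⊥ = E⁰ \ R(H)`. -/
def Hperp (s r : E → V) (H : Set V) : Set V := Set.univ \ ReachSet s r H

/-- The hereditary and saturated closure of a set of vertices. -/
def HSClosure (s r : E → V) (X : Set V) : Set V :=
  ⋂₀ {S : Set V | X ⊆ S ∧ Hereditary s r S ∧ Saturated s r S}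

/-- A cycle: a nonempty closed path whose edges have pairwise distinct sources. -/
def IsCycle (s r : E → V) (l : List E) : Prop :=
  ∃ v : V, l ≠ [] ∧ PathTo s r v v l ∧ (l.map s).Nodup

/-- A path (given as a nonempty list of edges starting at `w`) flows to `H` if its
last edge has source outside `H` and range inside `H`. -/
def FlowsTo (s r : E → V) (H : Set V) (w : V) (l : List E) : Prop :=
  (∃ u : V, PathTo s r w u l) ∧ ∃ e : E, l.getLast? = some e ∧ s e ∉ H ∧ r e ∈ H

/-! ### The talented monoid of a row-finite graph -/

/-- The free commutative monoid on `V × ℤ`. -/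
abbrev FreeTal (V : Type*) := (V × ℤ) →₀ ℕ

/-- The defining relations of the talented monoid:
`v(i) = Σ_{e ∈ s⁻¹(v)} r(e)(i+1)` for every regular vertex `v` and `i ∈ ℤ`. -/
def talRel {V E : Type*} (s r : E → V) (hrow : ∀ v : V, {e : E | s e = v}.Finite) :
    FreeTal V → FreeTal V → Prop := fun x y =>
  ∃ (v : V) (i : ℤ), (∃ e, s e = v) ∧ x = Finsupp.single (v, i) 1 ∧
    y = ∑ e ∈ (hrow v).toFinset, Finsupp.single (r e, i + 1) 1

/-- The congruence generated by the defining relations. -/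
noncomputable def talCon {V E : Type*} (s r : E → V) (hrow : ∀ v : V, {e : E | s e = v}.Finite) :
    AddCon (FreeTal V) := addConGen (talRel s r hrow)

/-- The talented monoid `T_E` of a row-finite graph. -/
abbrev TalMon {V E : Type*} (s r : E → V) (hrow : ∀ v : V, {e : E | s e = v}.Finite) :=
  (talCon s r hrow).Quotient

/-- The generator `v(i)` of the talented monoid, for `p = (v, i)`. -/
noncomputable def talGen {V E : Type*} (s r : E → V) (hrow : ∀ v : V, {e : E | s e = v}.Finite)
    (p : V × ℤ) : TalMon s r hrow :=
  (talCon s r hrow).mk' (Finsupp.single p 1)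

section OrderNotions

variable {M : Type*} [AddCommMonoid M]

/-- The algebraic preorder: `a ≤ b` iff `b = a + c` for some `c`. -/
def AlgLE (a b : M) : Prop := ∃ c, b = a + c

/-- Strict algebraic order: `a < b` iff `b = a + c` for some nonzero `c`. -/
def AlgLT (a b : M) : Prop := ∃ c, c ≠ 0 ∧ b = a + c

/-- Comparability with respect to the algebraic order. -/
def CmpRel (a b : M) : Prop := a = b ∨ AlgLT a b ∨ AlgLT b a

/-- The orthogonal set `I^⊥ = {a | a ∥ I} ∪ {0}`. -/
def perpSet (I : Set M) : Set M :=
  {a : M | a = 0 ∨ ∀ x ∈ I, x ≠ 0 → ¬ CmpRel a x}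

end OrderNotions

/-- The ℤ-order ideal `⟨H⟩` of the talented monoid generated by a set of vertices `H`:
all elements below a finite sum of shifted generators `v(i)`, `v ∈ H`. -/
def genIdeal {V E : Type*} (s r : E → V) (hrow : ∀ v : V, {e : E | s e = v}.Finite)
    (H : Set V) : Set (TalMon s r hrow) :=
  {x | ∃ l : List (V × ℤ), (∀ p ∈ l, p.1 ∈ H) ∧
    AlgLE x (l.map (talGen s r hrow)).sum}

lemma pathTo_append {s r : E → V} {u w : V} {l1 l2 : List E}
    (h : PathTo s r u w (l1 ++ l2)) : ∃ m, PathTo s r u m l1 ∧ PathTo s r m w l2 := by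
  induction l1 generalizing u with
  | nil => exact ⟨u, PathTo.nil u, h⟩
  | cons e t ih =>
    rw [List.cons_append] at h
    cases h with
    | cons e h' =>
      obtain ⟨m, hm1, hm2⟩ := ih h'
      exact ⟨m, PathTo.cons e hm1, hm2⟩

lemma pathTo_cons_src {s r : E → V} {u w : V} {e : E} {l : List E}
    (h : PathTo s r u w (e :: l)) : u = s e ∧ PathTo s r (r e) w l := by
  cases h with
  | cons e h' => exact ⟨rfl, h'⟩

lemma dup_split (s : E → V) : ∀ l : List E, ¬ (l.map s).Nodup →
    ∃ (l1 : List E) (e1 : E) (l2 : List E) (e2 : E) (l3 : List E),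
      l = l1 ++ e1 :: (l2 ++ e2 :: l3) ∧ s e1 = s e2 := by
  intro l
  induction l with
  | nil => simp
  | cons e t ih =>
    intro h
    by_cases hm : s e ∈ t.map s
    · obtain ⟨e2, he2, hse⟩ := List.mem_map.mp hm
      obtain ⟨t1, t2, rfl⟩ := List.append_of_mem he2
      exact ⟨[], e, t1, e2, t2, rfl, hse.symm⟩
    · have ht : ¬ (t.map s).Nodup := fun hn => h (by simp [hn, hm])
      obtain ⟨l1, e1, l2, e2, l3, rfl, hse⟩ := ih ht
      exact ⟨e :: l1, e1, l2, e2, l3, rfl, hse⟩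

lemma extract_cycle {s r : E → V} : ∀ (n : ℕ) (l : List E) (v : V), l.length ≤ n → l ≠ [] →
    PathTo s r v v l → ∃ c, IsCycle s r c ∧ ∀ e ∈ c, e ∈ l := by
  intro n
  induction n with
  | zero =>
    intro l v hl hne _
    exact absurd (List.length_eq_zero_iff.mp (Nat.le_zero.mp hl)) hne
  | succ n ih =>
    intro l v hl hne hp
    by_cases hnd : (l.map s).Nodup
    · exact ⟨l, ⟨v, hne, hp, hnd⟩, fun e he => he⟩
    · obtain ⟨l1, e1, l2, e2, l3, rfl, hse⟩ := dup_split s l hnd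
      obtain ⟨m, hm1, hm2⟩ := pathTo_append hp
      obtain ⟨rfl, hp2⟩ := pathTo_cons_src hm2
      obtain ⟨m2, hm21, hm22⟩ := pathTo_append hp2
      obtain ⟨rfl, _⟩ := pathTo_cons_src hm22
      have hpath : PathTo s r (s e1) (s e1) (e1 :: l2) := by
        refine PathTo.cons e1 ?_
        rw [hse]; exact hm21
      have hlen : (e1 :: l2).length ≤ n := by
        simp only [List.length_append, List.length_cons] at hl ⊢
        omega
      obtain ⟨c, hc, hsub⟩ := ih (e1 :: l2) (s e1) hlen (by simp) hpath
      refine ⟨c, hc, fun e he => ?_⟩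
      have := hsub e he
      simp only [List.mem_cons, List.mem_append] at this ⊢
      tauto

section Main

variable {V E : Type*} (s r : E → V) (hrow : ∀ v : V, {e : E | s e = v}.Finite)

def Good (v : V) : Prop :=
  (¬ ∃ e, s e = v) ∨ ∃ c : List E, IsCycle s r c ∧ ∃ e ∈ c, s e = v

def StepRel (w v : V) : Prop := ¬ Good s r v ∧ ∃ e, s e = v ∧ r e = w

lemma transGen_path {w v : V} (h : Relation.TransGen (StepRel s r) w v) :
    ∃ l : List E, l ≠ [] ∧ PathTo s r v w l ∧ ∀ e ∈ l, ¬ Good s r (s e) := by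
  induction h with
  | single hrel =>
    obtain ⟨hg, e, hse, hre⟩ := hrel
    subst hse; subst hre
    exact ⟨[e], by simp, PathTo.cons e (PathTo.nil _), by simpa using hg⟩
  | tail hwb hrel ih =>
    obtain ⟨l, hne, hp, hng⟩ := ih
    obtain ⟨hg, e, hse, hre⟩ := hrel
    subst hse; subst hre
    refine ⟨e :: l, by simp, PathTo.cons e hp, ?_⟩
    intro f hf
    rcases List.mem_cons.mp hf with rfl | hf
    · exact hg
    · exact hng f hf

lemma stepRel_wf [Finite V] : WellFounded (StepRel s r) := by
  have hirr : IsIrrefl V (Relation.TransGen (StepRel s r)) := by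
    constructor
    intro v h
    obtain ⟨l, hne, hp, hng⟩ := transGen_path s r h
    obtain ⟨c, hc, hsub⟩ := extract_cycle l.length l v le_rfl hne hp
    obtain ⟨w, hcne, -, -⟩ := id hc
    obtain ⟨e, he⟩ := List.exists_mem_of_ne_nil c hcne
    exact hng e (hsub e he) (Or.inr ⟨c, hc, e, he, rfl⟩)
  exact Subrelation.wf (fun h => Relation.TransGen.single h)
    (Finite.wellFounded_of_trans_of_irrefl _)

lemma talGen_step (v : V) (i : ℤ) (hv : ∃ e, s e = v) :
    talGen s r hrow (v, i) = ∑ e ∈ (hrow v).toFinset, talGen s r hrow (r e, i + 1) := by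
  have h : talCon s r hrow (Finsupp.single (v, i) 1)
      (∑ e ∈ (hrow v).toFinset, Finsupp.single (r e, i + 1) 1) :=
    AddConGen.Rel.of _ _ ⟨v, i, hv, rfl, rfl⟩
  have h2 : (talCon s r hrow).mk' (Finsupp.single (v, i) 1) =
      (talCon s r hrow).mk' (∑ e ∈ (hrow v).toFinset, Finsupp.single (r e, i + 1) 1) :=
    (AddCon.eq _).mpr h
  rw [talGen, h2, map_sum]
  rfl

def Decomp (x : TalMon s r hrow) : Prop :=
  ∃ l : List (V × ℤ), (∀ p ∈ l, Good s r p.1) ∧ x = (l.map (talGen s r hrow)).sum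

lemma decomp_zero : Decomp s r hrow 0 := ⟨[], by simp, by simp⟩

lemma decomp_add {x y : TalMon s r hrow} (hx : Decomp s r hrow x)
    (hy : Decomp s r hrow y) : Decomp s r hrow (x + y) := by
  obtain ⟨l1, h1, rfl⟩ := hx
  obtain ⟨l2, h2, rfl⟩ := hy
  refine ⟨l1 ++ l2, ?_, by simp⟩
  intro p hp
  rcases List.mem_append.mp hp with h | h
  · exact h1 p h
  · exact h2 p h

lemma decomp_gen [Finite V] (v : V) :
    ∀ i : ℤ, Decomp s r hrow (talGen s r hrow (v, i)) := by
  induction v using (stepRel_wf s r).induction with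
  | _ v ih =>
    intro i
    by_cases hg : Good s r v
    · exact ⟨[(v, i)], by simpa using hg, by simp⟩
    · have hv : ∃ e, s e = v := by
        by_contra h; exact hg (Or.inl h)
      rw [talGen_step s r hrow v i hv]
      refine Finset.sum_induction _ _ (fun a b ha hb => decomp_add s r hrow ha hb)
        (decomp_zero s r hrow) ?_
      intro e he
      exact ih (r e) ⟨hg, e, by simpa using (Set.Finite.mem_toFinset _).mp he, rfl⟩ (i + 1)

lemma decomp_nsmul {x : TalMon s r hrow} (hx : Decomp s r hrow x) (n : ℕ) :
    Decomp s r hrow (n • x) := by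
  induction n with
  | zero => rw [zero_nsmul]; exact decomp_zero s r hrow
  | succ n ih => rw [succ_nsmul]; exact decomp_add s r hrow ih hx

lemma decomp_all [Finite V] (x : TalMon s r hrow) : Decomp s r hrow x := by
  obtain ⟨f, rfl⟩ := AddCon.mk'_surjective x
  induction f using Finsupp.induction with
  | zero => simpa using decomp_zero s r hrow
  | single_add p n f _ _ ih =>
    rw [map_add]
    refine decomp_add s r hrow ?_ ih
    have h1 : Finsupp.single p n = n • Finsupp.single p 1 := by
      rw [Finsupp.smul_single', mul_one]
    rw [h1, map_nsmul]
    exact decomp_nsmul s r hrow (decomp_gen s r hrow p.1 p.2) n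

end Main

theorem stmt_9 {V E : Type*} [Finite V] [Finite E] (s r : E → V)
    (hrow : ∀ v : V, {e : E | s e = v}.Finite)
    (x : TalMon s r hrow) :
    ∃ l : List (V × ℤ),
      (∀ p ∈ l, (¬ ∃ e, s e = p.1) ∨ ∃ c : List E, IsCycle s r c ∧ ∃ e ∈ c, s e = p.1) ∧
      x = (l.map (talGen s r hrow)).sum := by
  obtain ⟨l, hl, hx⟩ := decomp_all s r hrow x
  exact ⟨l, hl, hx⟩
end

section
/- Let E be a row-finite graph, H a hereditary saturated subset of E⁰, and ⟨H⟩ the ℤ-order ideal of the talented monoid T_E generated by H. Then ⟨H⟩^⊥ = ⟨H^⊥⟩, where H^⊥ = E⁰ \ R(H) is the set of vertices with no path into H. -/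
variable {V E : Type*}

namespace Stmt14

variable {V E : Type*} {s r : E → V} {hrow : ∀ v : V, {e : E | s e = v}.Finite}

/-- `Bad K x`: the support of `x` contains a vertex outside `K`. -/
def Bad (K : Set V) (x : FreeTal V) : Prop := ∃ p ∈ x.support, p.1 ∉ K

lemma bad_add {K : Set V} {x y : FreeTal V} : Bad K (x + y) ↔ Bad K x ∨ Bad K y := by
  constructor
  · rintro ⟨p, hp, hpK⟩
    rw [Finsupp.mem_support_iff, Finsupp.add_apply] at hp
    rcases Nat.eq_zero_or_pos (x p) with h | h
    · exact Or.inr ⟨p, Finsupp.mem_support_iff.2 (by omega), hpK⟩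
    · exact Or.inl ⟨p, Finsupp.mem_support_iff.2 (by omega), hpK⟩
  · rintro (⟨p, hp, hpK⟩ | ⟨p, hp, hpK⟩) <;>
    · rw [Finsupp.mem_support_iff] at hp
      exact ⟨p, Finsupp.mem_support_iff.2 (by simp [Finsupp.add_apply]; omega), hpK⟩

lemma not_bad_zero {K : Set V} : ¬ Bad K (0 : FreeTal V) := by
  rintro ⟨p, hp, -⟩; simp at hp

lemma bad_single {K : Set V} {p : V × ℤ} : Bad K (Finsupp.single p 1) ↔ p.1 ∉ K := by
  constructor
  · rintro ⟨q, hq, hqK⟩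
    rw [Finsupp.support_single_ne_zero p one_ne_zero, Finset.mem_singleton] at hq
    subst hq; exact hqK
  · intro h
    exact ⟨p, by rw [Finsupp.support_single_ne_zero p one_ne_zero]; simp, h⟩

lemma bad_sum_iff {K : Set V} (t : Finset E) (i : ℤ) :
    Bad K (∑ e ∈ t, Finsupp.single ((r e, i) : V × ℤ) (1:ℕ)) ↔ ∃ e ∈ t, r e ∉ K := by
  classical
  induction t using Finset.induction_on with
  | empty => simp [not_bad_zero]
  | insert a t' hnot ih =>
    rw [Finset.sum_insert hnot, bad_add, bad_single, ih]
    constructor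
    · rintro (h | ⟨e, he, hre⟩)
      · exact ⟨_, Finset.mem_insert_self _ _, h⟩
      · exact ⟨e, Finset.mem_insert_of_mem he, hre⟩
    · rintro ⟨e, he, hre⟩
      rcases Finset.mem_insert.1 he with rfl | he
      · exact Or.inl hre
      · exact Or.inr ⟨e, he, hre⟩

/-- `Bad K` is invariant along the congruence for hereditary saturated `K`. -/
lemma bad_iff_of_con {K : Set V} (hher : Hereditary s r K) (hsat : Saturated s r K)
    {a b : FreeTal V} (h : talCon s r hrow a b) : Bad K a ↔ Bad K b := by
  classical
  let c : AddCon (FreeTal V) :=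
    { r := fun x y => (Bad K x ↔ Bad K y),
      iseqv := ⟨fun _ => Iff.rfl, Iff.symm, Iff.trans⟩,
      add' := fun h1 h2 => (bad_add.trans (or_congr h1 h2)).trans bad_add.symm }
  have hle : talCon s r hrow ≤ c := AddCon.addConGen_le.2 (fun x y hxy => ?_)
  · exact hle h
  obtain ⟨v, i, hreg, rfl, rfl⟩ := hxy
  show Bad K _ ↔ Bad K _
  rw [bad_single, bad_sum_iff]
  constructor
  · intro hv
    by_contra hc
    push_neg at hc
    exact hv (hsat v hreg (fun e he => hc e (by simpa [(hrow v).mem_toFinset] using he)))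
  · rintro ⟨e, he, hre⟩ hv
    rw [(hrow v).mem_toFinset, Set.mem_setOf_eq] at he
    exact hre (hher e (he ▸ hv))

lemma mk_eq_mk_iff {a b : FreeTal V} :
    (talCon s r hrow).mk' a = (talCon s r hrow).mk' b ↔ talCon s r hrow a b :=
  AddCon.eq _

lemma not_bad_list_sum {K : Set V} {l : List (V × ℤ)} (hl : ∀ p ∈ l, p.1 ∈ K) :
    ¬ Bad K ((l.map (fun p => Finsupp.single p (1:ℕ))).sum) := by
  induction l with
  | nil => simpa using not_bad_zero
  | cons p l ih =>
    intro hb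
    rw [List.map_cons, List.sum_cons] at hb
    rcases bad_add.1 hb with h | h
    · exact (bad_single.1 h) (hl p List.mem_cons_self)
    · exact ih (fun q hq => hl q (List.mem_cons_of_mem _ hq)) h

lemma mk_list_sum (l : List (V × ℤ)) :
    (talCon s r hrow).mk' ((l.map (fun p => Finsupp.single p (1:ℕ))).sum)
      = (l.map (talGen s r hrow)).sum := by
  induction l with
  | nil => simp
  | cons p l ih =>
    rw [List.map_cons, List.sum_cons, map_add, ih, List.map_cons, List.sum_cons]
    rfl

lemma single_eq_replicate_sum (p : V × ℤ) (n : ℕ) :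
    Finsupp.single p n = ((List.replicate n p).map (fun q => Finsupp.single q (1:ℕ))).sum := by
  induction n with
  | zero => simp
  | succ n ih =>
    rw [List.replicate_succ, List.map_cons, List.sum_cons, ← ih,
      show n + 1 = 1 + n by omega, Finsupp.single_add]

lemma exists_rep_list {K : Set V} (a : FreeTal V) (h : ¬ Bad K a) :
    ∃ l : List (V × ℤ), (∀ p ∈ l, p.1 ∈ K) ∧
      a = (l.map (fun q => Finsupp.single q (1:ℕ))).sum := by
  classical
  induction a using Finsupp.induction with
  | zero => exact ⟨[], by simp, by simp⟩
  | single_add p n f hps hn ih =>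
    have hK : p.1 ∈ K := by
      by_contra hc
      refine h ⟨p, Finsupp.mem_support_iff.2 ?_, hc⟩
      rw [Finsupp.add_apply, Finsupp.single_apply, if_pos rfl,
        Finsupp.notMem_support_iff.1 hps]
      omega
    have hf : ¬ Bad K f := fun hb => h (bad_add.2 (Or.inr hb))
    obtain ⟨l, hl1, hl2⟩ := ih hf
    refine ⟨List.replicate n p ++ l, ?_, ?_⟩
    · intro q hq
      rcases List.mem_append.1 hq with hq | hq
      · rw [List.eq_of_mem_replicate hq]; exact hK
      · exact hl1 q hq
    · rw [List.map_append, List.sum_append, ← hl2, ← single_eq_replicate_sum]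

lemma mem_genIdeal_iff {K : Set V} (hher : Hereditary s r K) (hsat : Saturated s r K)
    (a : FreeTal V) :
    (talCon s r hrow).mk' a ∈ genIdeal s r hrow K ↔ ¬ Bad K a := by
  constructor
  · rintro ⟨l, hl, c, hc⟩
    obtain ⟨c', rfl⟩ := AddCon.mk'_surjective c
    rw [← mk_list_sum, ← map_add] at hc
    have hcon := mk_eq_mk_iff.1 hc
    have h2 := bad_iff_of_con hher hsat hcon
    intro hba
    exact not_bad_list_sum hl (h2.2 (bad_add.2 (Or.inl hba)))
  · intro h
    obtain ⟨l, hl, rfl⟩ := exists_rep_list a h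
    exact ⟨l, hl, 0, by rw [add_zero, mk_list_sum]⟩

lemma empty_hereditary : Hereditary s r (∅ : Set V) :=
  fun _ he => absurd he (Set.notMem_empty _)

lemma empty_saturated : Saturated s r (∅ : Set V) :=
  fun _ hre hall => (Set.notMem_empty _ (hall hre.choose hre.choose_spec)).elim

lemma mk_eq_zero_iff (a : FreeTal V) : ((talCon s r hrow).mk' a = 0) ↔ a = 0 := by
  constructor
  · intro h
    have h0 : (talCon s r hrow).mk' a = (talCon s r hrow).mk' 0 := by rw [h, map_zero]
    have hiff := bad_iff_of_con (K := (∅ : Set V)) empty_hereditary empty_saturated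
      (mk_eq_mk_iff.1 h0)
    by_contra ha
    obtain ⟨p, hp⟩ := Finsupp.support_nonempty_iff.2 ha
    exact not_bad_zero (hiff.1 ⟨p, hp, Set.notMem_empty _⟩)
  · rintro rfl; exact map_zero _

lemma gen_expand (v : V) (i : ℤ) (hreg : ∃ e, s e = v) :
    talGen s r hrow (v, i) = ∑ e ∈ (hrow v).toFinset, talGen s r hrow (r e, i + 1) := by
  have hrel : talCon s r hrow (Finsupp.single ((v, i) : V × ℤ) 1)
      (∑ e ∈ (hrow v).toFinset, Finsupp.single ((r e, i + 1) : V × ℤ) 1) :=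
    AddConGen.Rel.of _ _ ⟨v, i, hreg, rfl, rfl⟩
  have h := mk_eq_mk_iff.2 hrel
  rw [talGen, h, map_sum]
  rfl

lemma gen_le_of_mem_support {a : FreeTal V} {p : V × ℤ} (hp : p ∈ a.support) :
    AlgLE (talGen s r hrow p) ((talCon s r hrow).mk' a) := by
  refine ⟨(talCon s r hrow).mk' (Finsupp.single p (a p - 1) + Finsupp.erase p a), ?_⟩
  have h1 : (1 : ℕ) + (a p - 1) = a p := by
    have := Finsupp.mem_support_iff.1 hp; omega
  have h2 : Finsupp.single p 1 + (Finsupp.single p (a p - 1) + Finsupp.erase p a) = a := by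
    rw [← add_assoc, ← Finsupp.single_add, h1, Finsupp.single_add_erase]
  rw [talGen, ← map_add, h2]

lemma hperp_hereditary (H : Set V) : Hereditary s r (Hperp s r H) := by
  intro e he
  refine ⟨trivial, fun hre => he.2 ?_⟩
  obtain ⟨w, hw, l, hl⟩ := hre
  exact ⟨w, hw, e :: l, PathTo.cons e hl⟩

lemma hperp_saturated (H : Set V) (hher : Hereditary s r H) :
    Saturated s r (Hperp s r H) := by
  intro v hreg hall
  refine ⟨trivial, ?_⟩
  rintro ⟨w, hw, l, hl⟩
  cases hl with
  | nil =>
    obtain ⟨e, he⟩ := hreg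
    exact (hall e he).2 ⟨r e, hher e (by rw [he]; exact hw), [], PathTo.nil _⟩
  | cons e hl' =>
    exact (hall e rfl).2 ⟨w, hw, _, hl'⟩

lemma mem_reachSet_of_mem {H : Set V} {v : V} (hv : v ∈ H) : v ∈ ReachSet s r H :=
  ⟨v, hv, [], PathTo.nil v⟩

lemma eq_zero_of_not_bad_both {H : Set V} {a : FreeTal V}
    (h1 : ¬ Bad H a) (h2 : ¬ Bad (Hperp s r H) a) : a = 0 := by
  rw [← Finsupp.support_eq_empty, Finset.eq_empty_iff_forall_notMem]
  intro p hp
  by_cases hk : p.1 ∈ H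
  · exact h2 ⟨p, hp, fun hperp => hperp.2 (mem_reachSet_of_mem hk)⟩
  · exact h1 ⟨p, hp, hk⟩

lemma exists_below_gen {H : Set V} {v w : V} {l : List E}
    (hpath : PathTo s r v w l) :
    w ∈ H → ∀ i : ℤ, ∃ z : TalMon s r hrow,
      z ∈ genIdeal s r hrow H ∧ z ≠ 0 ∧ AlgLE z (talGen s r hrow (v, i)) := by
  classical
  induction hpath with
  | nil u =>
    intro hw i
    refine ⟨talGen s r hrow (u, i),
      ⟨[(u, i)], by simpa using hw, 0, by simp⟩, ?_, 0, (add_zero _).symm⟩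
    rw [talGen, Ne, mk_eq_zero_iff]
    exact fun h => one_ne_zero (Finsupp.single_eq_zero.1 h)
  | cons e hl ih =>
    intro hw i
    obtain ⟨z, hz1, hz2, c, hc⟩ := ih hw (i + 1)
    have hreg : ∃ e', s e' = s e := ⟨e, rfl⟩
    have hme : e ∈ (hrow (s e)).toFinset := by rw [Set.Finite.mem_toFinset]; rfl
    refine ⟨z, hz1, hz2,
      c + ∑ e' ∈ (hrow (s e)).toFinset.erase e, talGen s r hrow (r e', i + 1), ?_⟩
    rw [gen_expand (s e) i hreg, ← Finset.add_sum_erase _ _ hme, hc, add_assoc]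

end Stmt14

theorem stmt_14 {V E : Type*} (s r : E → V)
    (hrow : ∀ v : V, {e : E | s e = v}.Finite)
    (H : Set V) (hher : Hereditary s r H) (hsat : Saturated s r H) :
    perpSet (genIdeal s r hrow H) = genIdeal s r hrow (Hperp s r H) := by
  have hperpher := Stmt14.hperp_hereditary (s := s) (r := r) H
  have hperpsat := Stmt14.hperp_saturated H hher
  ext x
  obtain ⟨a, rfl⟩ := AddCon.mk'_surjective x
  rw [Stmt14.mem_genIdeal_iff hperpher hperpsat]
  constructor
  · intro hx hb
    obtain ⟨p, hp, hpk⟩ := hb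
    have hreach : p.1 ∈ ReachSet s r H := by
      by_contra hr; exact hpk ⟨trivial, hr⟩
    obtain ⟨w, hw, l, hl⟩ := hreach
    obtain ⟨z, hz1, hz2, hz3⟩ := Stmt14.exists_below_gen (hrow := hrow) hl hw p.2
    have hle : AlgLE z ((talCon s r hrow).mk' a) := by
      obtain ⟨c, hc⟩ := hz3
      obtain ⟨d, hd⟩ := Stmt14.gen_le_of_mem_support (hrow := hrow) hp
      exact ⟨c + d, by rw [hd, hc, add_assoc]⟩
    rcases hx with h0 | hx
    · rw [Stmt14.mk_eq_zero_iff] at h0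
      rw [h0] at hp; simp at hp
    · refine hx z hz1 hz2 ?_
      obtain ⟨c, hc⟩ := hle
      rcases eq_or_ne c 0 with rfl | hc0
      · exact Or.inl (by rw [hc, add_zero])
      · exact Or.inr (Or.inr ⟨c, hc0, hc⟩)
  · intro ha
    by_cases h0 : (talCon s r hrow).mk' a = 0
    · exact Or.inl h0
    right
    intro y hy hy0 hcmp
    obtain ⟨b, rfl⟩ := AddCon.mk'_surjective y
    have hbb : ¬ Stmt14.Bad H b := (Stmt14.mem_genIdeal_iff hher hsat b).1 hy
    rcases hcmp with heq | ⟨c, hc0, hc⟩ | ⟨c, hc0, hc⟩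
    · have hcon := Stmt14.mk_eq_mk_iff.1 heq
      have hba : ¬ Stmt14.Bad H a :=
        fun h => hbb ((Stmt14.bad_iff_of_con hher hsat hcon).1 h)
      exact h0 (by rw [Stmt14.mk_eq_zero_iff]
                   exact Stmt14.eq_zero_of_not_bad_both hba ha)
    · obtain ⟨c', rfl⟩ := AddCon.mk'_surjective c
      rw [← map_add] at hc
      have hcon := Stmt14.mk_eq_mk_iff.1 hc
      have hsum : ¬ Stmt14.Bad H (a + c') :=
        fun h => hbb ((Stmt14.bad_iff_of_con hher hsat hcon).2 h)
      have hba : ¬ Stmt14.Bad H a := fun h => hsum (Stmt14.bad_add.2 (Or.inl h))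
      exact h0 (by rw [Stmt14.mk_eq_zero_iff]
                   exact Stmt14.eq_zero_of_not_bad_both hba ha)
    · obtain ⟨c', rfl⟩ := AddCon.mk'_surjective c
      rw [← map_add] at hc
      have hcon := Stmt14.mk_eq_mk_iff.1 hc
      have hsum : ¬ Stmt14.Bad (Hperp s r H) (b + c') :=
        fun h => ha ((Stmt14.bad_iff_of_con hperpher hperpsat hcon).2 h)
      have hbperp : ¬ Stmt14.Bad (Hperp s r H) b :=
        fun h => hsum (Stmt14.bad_add.2 (Or.inl h))
      exact hy0 (by rw [Stmt14.mk_eq_zero_iff]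
                    exact Stmt14.eq_zero_of_not_bad_both hbb hbperp)
end

section
/- Let E be a row-finite graph. The talented monoid T_E is decomposable (i.e., T_E = I ⊕ J for nontrivial ℤ-order ideals I, J) if and only if there exist nontrivial hereditary saturated subsets H and K of E⁰ with H ∩ K = ∅ such that for every vertex v ∈ E⁰ \ (H ∪ K) there is a nonzero but finite number of paths starting at v that flow to H ∪ K. -/
variable {V E : Type*}

/-- The shift by `n` on the free commutative monoid on `V × ℤ`. -/
noncomputable def shiftFree (V : Type*) (n : ℤ) : FreeTal V →+ FreeTal V :=
  Finsupp.mapDomain.addMonoidHom (fun p : V × ℤ => (p.1, p.2 + n))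

/-- The shift by `n` on the talented monoid, defining the action of ℤ. -/
noncomputable def shiftTal {V E : Type*} (s r : E → V)
    (hrow : ∀ v : V, {e : E | s e = v}.Finite) (n : ℤ) :
    TalMon s r hrow →+ TalMon s r hrow :=
  AddCon.lift _ ((talCon s r hrow).mk'.comp (shiftFree V n)) (by
    refine AddCon.addConGen_le.mpr ?_
    rintro x y ⟨v, i, hv, rfl, rfl⟩
    have h1 : (shiftFree V n) (Finsupp.single (v, i) 1) = Finsupp.single (v, i + n) 1 := by
      simp [shiftFree, Finsupp.mapDomain_single]
    have h2 : (shiftFree V n) (∑ e ∈ (hrow v).toFinset, Finsupp.single (r e, i + 1) 1)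
        = ∑ e ∈ (hrow v).toFinset, Finsupp.single (r e, (i + n) + 1) 1 := by
      rw [map_sum]
      refine Finset.sum_congr rfl fun e _ => ?_
      simp [shiftFree, Finsupp.mapDomain_single]
      ring_nf
    rw [AddCon.ker_rel, AddMonoidHom.comp_apply, AddMonoidHom.comp_apply, h1, h2]
    exact (AddCon.eq _).mpr (AddConGen.Rel.of _ _ ⟨v, i + n, hv, rfl, rfl⟩))

/-- A ℤ-order ideal of the talented monoid: a downward closed, shift-invariant
submonoid. -/
def IsZOrderIdeal {V E : Type*} (s r : E → V)
    (hrow : ∀ v : V, {e : E | s e = v}.Finite) (I : Set (TalMon s r hrow)) : Prop :=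
  (0 : TalMon s r hrow) ∈ I ∧
    (∀ a b, a ∈ I → b ∈ I → a + b ∈ I) ∧
    (∀ a b, b ∈ I → AlgLE a b → a ∈ I) ∧
    ∀ (n : ℤ) (x), x ∈ I → shiftTal s r hrow n x ∈ I

namespace Tal19
variable {V E : Type*} (s r : E → V) (hrow : ∀ v : V, {e : E | s e = v}.Finite)

/-- One-step expansion of a single generator. -/
noncomputable def expand (v : V) (i : ℤ) : FreeTal V :=
  ∑ e ∈ (hrow v).toFinset, Finsupp.single (r e, i + 1) 1

def Step (x y : FreeTal V) : Prop :=
  ∃ (v : V) (i : ℤ) (z : FreeTal V), (∃ e, s e = v) ∧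
    x = Finsupp.single (v, i) 1 + z ∧ y = expand s r hrow v i + z

abbrev Steps : FreeTal V → FreeTal V → Prop := Relation.ReflTransGen (Step s r hrow)

variable {s r hrow}

/-- total degree -/
def deg (x : FreeTal V) : ℕ := x.sum fun _ n => n

lemma deg_add (x y : FreeTal V) : deg (x + y) = deg x + deg y := by
  classical
  simpa [deg] using Finsupp.sum_add_index' (by simp) (by simp)

lemma deg_single (p : V × ℤ) (n : ℕ) : deg (Finsupp.single p n) = n := by
  classical
  simp [deg, Finsupp.sum_single_index]

lemma deg_eq_zero {x : FreeTal V} : deg x = 0 ↔ x = 0 := by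
  classical
  constructor
  · intro h
    ext p
    simp only [Finsupp.coe_zero, Pi.zero_apply]
    by_contra hp
    have hmem : p ∈ x.support := Finsupp.mem_support_iff.mpr hp
    have : x p ≤ deg x := Finset.single_le_sum (f := fun p => x p) (fun _ _ => Nat.zero_le _) hmem
    omega
  · rintro rfl; simp [deg]

lemma sub_single_add {x : FreeTal V} {p : V × ℤ} (h : x p ≠ 0) :
    x = Finsupp.single p 1 + (x - Finsupp.single p 1) := by
  classical
  ext q
  by_cases hq : q = p
  · subst hq
    simp [Finsupp.single_apply, Finsupp.tsub_apply]
    omega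
  · simp [Finsupp.single_apply, Ne.symm hq, Finsupp.tsub_apply, hq]

lemma deg_sum_list (l : List (FreeTal V)) : deg l.sum = (l.map deg).sum := by
  induction l with
  | nil => simp [deg]
  | cons a t ih => simp [deg_add, ih]

lemma deg_sum {ι : Type*} (t : Finset ι) (f : ι → FreeTal V) :
    deg (∑ e ∈ t, f e) = ∑ e ∈ t, deg (f e) := by
  classical
  induction t using Finset.induction with
  | empty => simp [deg]
  | insert a t' hx ih => simp [Finset.sum_insert hx, deg_add, ih]

lemma expand_ne_zero {v : V} {i : ℤ} (hv : ∃ e, s e = v) : expand s r hrow v i ≠ 0 := by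
  classical
  obtain ⟨e, he⟩ := hv
  have hmem : e ∈ (hrow v).toFinset := by simp [he]
  intro h
  have h1 : deg (expand s r hrow v i) = (hrow v).toFinset.card := by
    unfold expand
    rw [deg_sum]
    simp [deg_single]
  rw [h] at h1
  simp [deg] at h1
  have : 0 < (hrow v).toFinset.card := Finset.card_pos.mpr ⟨e, hmem⟩
  omega

lemma step_deg_le {x y : FreeTal V} (h : Step s r hrow x y) : deg x ≤ deg y := by
  classical
  obtain ⟨v, i, z, hv, rfl, rfl⟩ := h
  rw [deg_add, deg_add, deg_single]
  have : 1 ≤ deg (expand s r hrow v i) := by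
    rcases Nat.eq_zero_or_pos (deg (expand s r hrow v i)) with h0 | h1
    · exact absurd (deg_eq_zero.mp h0) (expand_ne_zero hv)
    · exact h1
  omega

lemma steps_deg_le {x y : FreeTal V} (h : Steps s r hrow x y) : deg x ≤ deg y := by
  induction h with
  | refl => exact le_refl _
  | tail _ h ih => exact le_trans ih (step_deg_le h)

lemma Step.add_const {x y : FreeTal V} (h : Step s r hrow x y) (c : FreeTal V) :
    Step s r hrow (x + c) (y + c) := by
  obtain ⟨v, i, z, hv, rfl, rfl⟩ := h
  exact ⟨v, i, z + c, hv, by rw [add_assoc], by rw [add_assoc]⟩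

lemma Steps.add_const {x y : FreeTal V} (h : Steps s r hrow x y) (c : FreeTal V) :
    Steps s r hrow (x + c) (y + c) := by
  induction h with
  | refl => exact .refl
  | tail _ h ih => exact .tail ih (h.add_const c)

lemma steps_add {x y x' y' : FreeTal V} (h : Steps s r hrow x x') (h' : Steps s r hrow y y') :
    Steps s r hrow (x + y) (x' + y') := by
  refine .trans (h.add_const y) ?_
  rw [add_comm x' y, add_comm x' y']
  exact h'.add_const x'

lemma single_add_eq_single_add {p q : V × ℤ} (hpq : p ≠ q) {z z' : FreeTal V}
    (h : Finsupp.single p 1 + z = Finsupp.single q 1 + z') :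
    ∃ w, z = Finsupp.single q 1 + w ∧ z' = Finsupp.single p 1 + w := by
  classical
  have hq : z q ≠ 0 := by
    have := DFunLike.congr_fun h q
    simp only [Finsupp.coe_add, Pi.add_apply, Finsupp.single_apply, if_neg hpq, if_pos] at this
    simp at this
    omega
  refine ⟨z - Finsupp.single q 1, sub_single_add hq, ?_⟩
  have h2 : Finsupp.single q 1 + (Finsupp.single p 1 + (z - Finsupp.single q 1)) =
      Finsupp.single q 1 + z' := by
    rw [← h, ← add_assoc, add_comm (Finsupp.single q 1) (Finsupp.single p 1), add_assoc,
      ← sub_single_add hq]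
  exact (add_left_cancel h2).symm

lemma step_diamond {x y y' : FreeTal V} (h : Step s r hrow x y) (h' : Step s r hrow x y') :
    y = y' ∨ ∃ w, Step s r hrow y w ∧ Step s r hrow y' w := by
  classical
  obtain ⟨v, i, z, hv, rfl, hy⟩ := h
  obtain ⟨v', i', z', hv', hx, hy'⟩ := h'
  by_cases hp : (v, i) = ((v', i') : V × ℤ)
  · left
    obtain ⟨rfl, rfl⟩ := Prod.mk.injEq .. ▸ hp
    have : z = z' := add_left_cancel (hx : _ = _)
    rw [hy, hy', this]
  · right
    obtain ⟨w, hzw, hz'w⟩ := single_add_eq_single_add hp hx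
    refine ⟨expand s r hrow v i + expand s r hrow v' i' + w, ?_, ?_⟩
    · refine ⟨v', i', expand s r hrow v i + w, hv', ?_, ?_⟩
      · rw [hy, hzw]; abel
      · abel
    · refine ⟨v, i, expand s r hrow v' i' + w, hv, ?_, ?_⟩
      · rw [hy', hz'w]; abel
      · abel

lemma steps_confl {x y y' : FreeTal V} (h : Steps s r hrow x y) (h' : Steps s r hrow x y') :
    ∃ w, Steps s r hrow y w ∧ Steps s r hrow y' w := by
  refine Relation.church_rosser ?_ h h'
  intro a b c hab hac
  rcases step_diamond hab hac with rfl | ⟨w, hbw, hcw⟩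
  · exact ⟨b, .refl, .refl⟩
  · exact ⟨w, .single hbw, .single hcw⟩

/-- Church–Rosser: the talented-monoid congruence coincides with joinability. -/
lemma con_iff_join {x y : FreeTal V} :
    talCon s r hrow x y ↔ ∃ z, Steps s r hrow x z ∧ Steps s r hrow y z := by
  constructor
  · intro h
    refine (AddCon.addConGen_le (c := ⟨⟨fun a b => ∃ z, Steps s r hrow a z ∧ Steps s r hrow b z,
      ⟨fun a => ⟨a, .refl, .refl⟩, fun ⟨z, h1, h2⟩ => ⟨z, h2, h1⟩,
        fun ⟨z1, ha, hb1⟩ ⟨z2, hb2, hc⟩ => ?_⟩⟩, ?_⟩)).mpr ?_ h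
    · obtain ⟨w, h1w, h2w⟩ := steps_confl hb1 hb2
      exact ⟨w, ha.trans h1w, hc.trans h2w⟩
    · rintro a b a' b' ⟨z1, ha, hb⟩ ⟨z2, ha', hb'⟩
      exact ⟨z1 + z2, steps_add ha ha', steps_add hb hb'⟩
    · rintro a b ⟨v, i, hv, rfl, rfl⟩
      exact ⟨∑ e ∈ (hrow v).toFinset, Finsupp.single (r e, i + 1) 1,
        .single ⟨v, i, 0, hv, by simp, by simp [expand]⟩, .refl⟩
  · rintro ⟨z, hx, hy⟩
    have key : ∀ {a b}, Steps s r hrow a b → talCon s r hrow a b := by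
      intro a b hab
      induction hab with
      | refl => exact (talCon s r hrow).refl _
      | tail _ h ih =>
        refine (talCon s r hrow).trans ih ?_
        obtain ⟨v, i, z0, hv, rfl, rfl⟩ := h
        exact (talCon s r hrow).add
          (AddConGen.Rel.of _ _ (show talRel s r hrow _ _ from ⟨v, i, hv, rfl, rfl⟩)) ((talCon s r hrow).refl z0)
    exact (talCon s r hrow).trans (key hx) ((talCon s r hrow).symm (key hy))

end Tal19
namespace Tal19
variable {V E : Type*} {s r : E → V} {hrow : ∀ v : V, {e : E | s e = v}.Finite}

/-- Support of `x` lies over `S`. -/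
def SuppIn (S : Set V) (x : FreeTal V) : Prop := ∀ p : V × ℤ, x p ≠ 0 → p.1 ∈ S

lemma suppIn_add {S : Set V} {x y : FreeTal V} (hx : SuppIn S x) (hy : SuppIn S y) :
    SuppIn S (x + y) := by
  intro p hp
  simp only [Finsupp.coe_add, Pi.add_apply] at hp
  rcases Nat.eq_zero_or_pos (x p) with h | h
  · exact hy p (by omega)
  · exact hx p (by omega)

lemma suppIn_of_add_left {S : Set V} {x y : FreeTal V} (h : SuppIn S (x + y)) : SuppIn S x := by
  intro p hp
  refine h p ?_
  simp only [Finsupp.coe_add, Pi.add_apply]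
  omega

lemma suppIn_expand {S : Set V} (hS : Hereditary s r S) {v : V} (hv : v ∈ S) (i : ℤ) :
    SuppIn S (expand s r hrow v i) := by
  classical
  intro p hp
  unfold expand at hp
  rw [Finsupp.finset_sum_apply] at hp
  obtain ⟨e, he, hne⟩ := Finset.exists_ne_zero_of_sum_ne_zero hp
  have hse : s e = v := by simpa using (Set.Finite.mem_toFinset _).mp he
  have : p = (r e, i + 1) := by
    by_contra hne'
    rw [Finsupp.single_apply, if_neg] at hne
    · exact hne rfl
    · exact fun hh => hne' (hh ▸ rfl)
  subst this
  exact hS e (hse ▸ hv)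

lemma step_suppIn {S : Set V} (hS : Hereditary s r S) {x y : FreeTal V}
    (h : Step s r hrow x y) (hx : SuppIn S x) : SuppIn S y := by
  obtain ⟨v, i, z, hv, rfl, rfl⟩ := h
  have hvS : v ∈ S := hx (v, i) (by simp)
  refine suppIn_add (suppIn_expand hS hvS i) ?_
  intro p hp
  refine hx p ?_
  simp only [Finsupp.coe_add, Pi.add_apply]
  omega

lemma steps_suppIn {S : Set V} (hS : Hereditary s r S) {x y : FreeTal V}
    (h : Steps s r hrow x y) (hx : SuppIn S x) : SuppIn S y := by
  induction h with
  | refl => exact hx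
  | tail _ h ih => exact step_suppIn hS h ih

lemma step_add_split {x c u : FreeTal V} (h : Step s r hrow (x + c) u) :
    (∃ x', Step s r hrow x x' ∧ u = x' + c) ∨ (∃ c', Step s r hrow c c' ∧ u = x + c') := by
  classical
  obtain ⟨v, i, z, hv, hxz, rfl⟩ := h
  by_cases hx : x (v, i) ≠ 0
  · left
    have hx' : x = Finsupp.single (v, i) 1 + (x - Finsupp.single (v, i) 1) := sub_single_add hx
    have hz : z = (x - Finsupp.single (v, i) 1) + c := by
      apply add_left_cancel (a := Finsupp.single (v, i) 1)
      rw [← hxz, ← add_assoc, ← hx']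
    exact ⟨expand s r hrow v i + (x - Finsupp.single (v, i) 1),
      ⟨v, i, _, hv, hx', rfl⟩, by rw [hz, add_assoc]⟩
  · right
    push_neg at hx
    have hc : c (v, i) ≠ 0 := by
      have h5 := DFunLike.congr_fun hxz (v, i)
      simp only [Finsupp.coe_add, Pi.add_apply, Finsupp.single_apply, if_pos] at h5
      rw [hx] at h5
      omega
    have hc' : c = Finsupp.single (v, i) 1 + (c - Finsupp.single (v, i) 1) := sub_single_add hc
    have hz : z = x + (c - Finsupp.single (v, i) 1) := by
      apply add_left_cancel (a := Finsupp.single (v, i) 1)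
      calc Finsupp.single (v, i) 1 + z = x + c := hxz.symm
        _ = x + (Finsupp.single (v, i) 1 + (c - Finsupp.single (v, i) 1)) := by rw [← hc']
        _ = Finsupp.single (v, i) 1 + (x + (c - Finsupp.single (v, i) 1)) := by
          rw [add_left_comm]
    exact ⟨expand s r hrow v i + (c - Finsupp.single (v, i) 1),
      ⟨v, i, _, hv, hc', rfl⟩, by rw [hz, add_left_comm]⟩

lemma steps_add_split {x c u : FreeTal V} (h : Steps s r hrow (x + c) u) :
    ∃ x' c', Steps s r hrow x x' ∧ Steps s r hrow c c' ∧ u = x' + c' := by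
  induction h with
  | refl => exact ⟨x, c, .refl, .refl, rfl⟩
  | tail _ h2 ih =>
    obtain ⟨x', c', hx, hc, rfl⟩ := ih
    rcases step_add_split h2 with ⟨x'', h, rfl⟩ | ⟨c'', h, rfl⟩
    · exact ⟨x'', c', hx.tail h, hc, rfl⟩
    · exact ⟨x', c'', hx, hc.tail h, rfl⟩

lemma steps_zero {z : FreeTal V} (h : Steps s r hrow 0 z) : z = 0 := by
  induction h with
  | refl => rfl
  | tail _ h ih =>
    subst ih
    obtain ⟨v, i, z0, hv, h0, rfl⟩ := h
    have h1 := congrArg deg h0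
    rw [deg_add, deg_single] at h1
    simp only [deg, Finsupp.sum_zero_index] at h1
    omega

section MkLemmas

variable (s r hrow)

lemma steps_mk {x y : FreeTal V} (h : Steps s r hrow x y) :
    (talCon s r hrow).mk' x = (talCon s r hrow).mk' y :=
  (AddCon.eq _).mpr (con_iff_join.mpr ⟨y, h, .refl⟩)

lemma mk_eq_mk {x y : FreeTal V} :
    (talCon s r hrow).mk' x = (talCon s r hrow).mk' y ↔
      ∃ z, Steps s r hrow x z ∧ Steps s r hrow y z :=
  Iff.trans (AddCon.eq _) con_iff_join

lemma talGen_expand {v : V} (i : ℤ) (hv : ∃ e, s e = v) :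
    talGen s r hrow (v, i) = ∑ e ∈ (hrow v).toFinset, talGen s r hrow (r e, i + 1) := by
  have h1 : talGen s r hrow (v, i) = (talCon s r hrow).mk' (expand s r hrow v i) :=
    steps_mk s r hrow (.single ⟨v, i, 0, hv, by simp, by simp⟩)
  rw [h1]
  unfold expand
  rw [map_sum]
  rfl

lemma talGen_ne_zero (p : V × ℤ) : talGen s r hrow p ≠ 0 := by
  intro h
  have h0 : (0 : TalMon s r hrow) = (talCon s r hrow).mk' 0 := by simp
  rw [h0] at h
  obtain ⟨z, h1, h2⟩ := (mk_eq_mk s r hrow).mp h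
  have hz : z = 0 := steps_zero h2
  subst hz
  have := steps_deg_le h1
  rw [deg_single] at this
  simp [deg] at this

end MkLemmas

section AlgLELemmas

variable {M N : Type*} [AddCommMonoid M] [AddCommMonoid N]

lemma algLE_refl (a : M) : AlgLE a a := ⟨0, (add_zero a).symm⟩

lemma algLE_zero (a : M) : AlgLE (0 : M) a := ⟨a, (zero_add a).symm⟩

lemma algLE_add_right (a b : M) : AlgLE a (a + b) := ⟨b, rfl⟩

lemma algLE_trans {a b c : M} (h1 : AlgLE a b) (h2 : AlgLE b c) : AlgLE a c := by
  obtain ⟨d1, rfl⟩ := h1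
  obtain ⟨d2, rfl⟩ := h2
  exact ⟨d1 + d2, add_assoc a d1 d2⟩

lemma algLE_add {a b c d : M} (h1 : AlgLE a b) (h2 : AlgLE c d) : AlgLE (a + c) (b + d) := by
  obtain ⟨d1, rfl⟩ := h1
  obtain ⟨d2, rfl⟩ := h2
  exact ⟨d1 + d2, by abel⟩

lemma algLE_map (f : M →+ N) {a b : M} (h : AlgLE a b) : AlgLE (f a) (f b) := by
  obtain ⟨c, rfl⟩ := h
  exact ⟨f c, by rw [map_add]⟩

end AlgLELemmas

lemma algLE_mk_iff {x y : FreeTal V} :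
    AlgLE ((talCon s r hrow).mk' x) ((talCon s r hrow).mk' y) ↔
      ∃ x' z, Steps s r hrow x x' ∧ Steps s r hrow y z ∧ ∃ d, z = x' + d := by
  constructor
  · rintro ⟨c, hc⟩
    obtain ⟨c₀, rfl⟩ := AddCon.mk'_surjective c
    rw [← map_add] at hc
    obtain ⟨z, hy, hxc⟩ := (mk_eq_mk s r hrow).mp hc
    obtain ⟨x', c', hx, _, rfl⟩ := steps_add_split hxc
    exact ⟨x', x' + c', hx, hy, c', rfl⟩
  · rintro ⟨x', z, hx, hy, d, rfl⟩
    refine ⟨(talCon s r hrow).mk' d, ?_⟩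
    rw [steps_mk s r hrow hy, steps_mk s r hrow hx, map_add]

lemma exists_list_rep (x : FreeTal V) :
    ∃ l : List (V × ℤ), x = (l.map (fun p => Finsupp.single p 1)).sum ∧ ∀ p ∈ l, x p ≠ 0 := by
  classical
  induction x using Finsupp.induction with
  | zero => exact ⟨[], by simp, by simp⟩
  | single_add a b f ha hb ih =>
    obtain ⟨l, hl, hmem⟩ := ih
    refine ⟨List.replicate b a ++ l, ?_, ?_⟩
    · rw [List.map_append, List.sum_append, List.map_replicate, List.sum_replicate, hl]
      congr 1
      rw [Finsupp.smul_single]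
      simp
    · intro p hp
      rcases List.mem_append.mp hp with hp | hp
      · have : p = a := List.eq_of_mem_replicate hp
        subst this
        have hfa : f p = 0 := by
          by_contra hfa
          exact ha (Finsupp.mem_support_iff.mpr hfa)
        simp [Finsupp.single_apply, hfa, hb]
      · have := hmem p hp
        simp only [Finsupp.coe_add, Pi.add_apply]
        omega

end Tal19
namespace Tal19
variable {V E : Type*} {s r : E → V} {hrow : ∀ v : V, {e : E | s e = v}.Finite}

section Ideal
variable (s r hrow)

lemma mk_list_sum (l : List (V × ℤ)) :
    (talCon s r hrow).mk' ((l.map fun p => Finsupp.single p 1).sum) =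
      (l.map (talGen s r hrow)).sum := by
  rw [map_list_sum, List.map_map]
  rfl

lemma shiftTal_talGen (n : ℤ) (p : V × ℤ) :
    shiftTal s r hrow n (talGen s r hrow p) = talGen s r hrow (p.1, p.2 + n) := by
  unfold shiftTal talGen
  show ((talCon s r hrow).mk'.comp (shiftFree V n)) (Finsupp.single p 1) = _
  simp [shiftFree, Finsupp.mapDomain_single]

lemma mem_genIdeal_of_suppIn {H : Set V} {x : FreeTal V} (h : SuppIn H x) :
    (talCon s r hrow).mk' x ∈ genIdeal s r hrow H := by
  obtain ⟨l, hl, hmem⟩ := exists_list_rep x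
  refine ⟨l, fun p hp => h p (hmem p hp), ?_⟩
  rw [show x = (l.map fun p => Finsupp.single p 1).sum from hl, mk_list_sum]
  exact algLE_refl _

lemma talGen_mem_genIdeal {H : Set V} {v : V} (hv : v ∈ H) (i : ℤ) :
    talGen s r hrow (v, i) ∈ genIdeal s r hrow H :=
  ⟨[(v, i)], by simpa using hv, by simpa using algLE_refl (talGen s r hrow (v, i))⟩

lemma genIdeal_isIdeal (H : Set V) : IsZOrderIdeal s r hrow (genIdeal s r hrow H) := by
  refine ⟨⟨[], by simp, by simpa using algLE_zero (0 : TalMon s r hrow)⟩, ?_, ?_, ?_⟩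
  · rintro a b ⟨l1, h1, ha⟩ ⟨l2, h2, hb⟩
    refine ⟨l1 ++ l2, ?_, ?_⟩
    · intro p hp
      rcases List.mem_append.mp hp with h | h
      exacts [h1 p h, h2 p h]
    · rw [List.map_append, List.sum_append]
      exact algLE_add ha hb
  · rintro a b ⟨l, hl, hb⟩ hab
    exact ⟨l, hl, algLE_trans hab hb⟩
  · rintro n x ⟨l, hl, hx⟩
    refine ⟨l.map (fun p => (p.1, p.2 + n)), ?_, ?_⟩
    · intro p hp
      obtain ⟨q, hq, rfl⟩ := List.mem_map.mp hp
      exact hl q hq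
    · have h2 := algLE_map (shiftTal s r hrow n) hx
      rwa [map_list_sum, List.map_map,
        show (shiftTal s r hrow n) ∘ (talGen s r hrow) =
          (talGen s r hrow) ∘ (fun p : V × ℤ => (p.1, p.2 + n)) from
          funext fun p => shiftTal_talGen s r hrow n p,
        ← List.map_map] at h2

lemma suppIn_vertexSet_of_mem {I : Set (TalMon s r hrow)} (hI : IsZOrderIdeal s r hrow I)
    {x : FreeTal V} (hx : (talCon s r hrow).mk' x ∈ I) :
    SuppIn {v | talGen s r hrow (v, 0) ∈ I} x := by
  intro p hp
  have h1 : AlgLE (talGen s r hrow p) ((talCon s r hrow).mk' x) := by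
    refine ⟨(talCon s r hrow).mk' (x - Finsupp.single p 1), ?_⟩
    rw [show talGen s r hrow p = (talCon s r hrow).mk' (Finsupp.single p 1) from rfl, ← map_add]
    exact congrArg _ (sub_single_add hp)
  have h2 : talGen s r hrow p ∈ I := hI.2.2.1 _ _ hx h1
  have h3 := hI.2.2.2 (-p.2) _ h2
  rw [shiftTal_talGen] at h3
  simpa using h3

lemma ideal_sum_mem {I : Set (TalMon s r hrow)} (hI : IsZOrderIdeal s r hrow I)
    {ι : Type*} (t : Finset ι) (f : ι → TalMon s r hrow) (h : ∀ e ∈ t, f e ∈ I) :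
    (∑ e ∈ t, f e) ∈ I :=
  Finset.sum_induction f (· ∈ I) (fun _ _ ha hb => hI.2.1 _ _ ha hb) hI.1 h

end Ideal
end Tal19
namespace Tal19
variable {V E : Type*} {s r : E → V} {hrow : ∀ v : V, {e : E | s e = v}.Finite}

section Flows
variable {S : Set V}

lemma pathTo_cons_inv {e : E} {l : List E} {u w : V} (h : PathTo s r u w (e :: l)) :
    s e = u ∧ PathTo s r (r e) w l := by
  cases h with
  | cons _ h' => exact ⟨rfl, h'⟩

lemma flowsTo_ne_nil {v : V} {l : List E} (h : FlowsTo s r S v l) : l ≠ [] := by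
  obtain ⟨_, e, hl, _⟩ := h
  rintro rfl
  simp at hl

lemma sources_mem_of_pathTo {H : Set V} (hH : Hereditary s r H) :
    ∀ {u w : V} {l : List E}, PathTo s r u w l → u ∈ H → ∀ e ∈ l, s e ∈ H := by
  intro u w l h
  induction h with
  | nil => simp
  | cons e h ih =>
    intro hu f hf
    rcases List.mem_cons.mp hf with rfl | hf
    · exact hu
    · exact ih (hH _ hu) f hf

lemma getLast_mem_of_getLast? {l : List E} {e : E} (h : l.getLast? = some e) : e ∈ l := by
  obtain ⟨h', rfl⟩ := List.mem_getLast?_eq_getLast (show e ∈ l.getLast? from h)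
  exact List.getLast_mem h'

lemma flows_empty_of_mem (hS : Hereditary s r S) {w : V} (hw : w ∈ S) :
    {l : List E | FlowsTo s r S w l} = ∅ := by
  ext l
  simp only [Set.mem_setOf_eq, Set.mem_empty_iff_false, iff_false]
  rintro ⟨⟨u, hp⟩, e, hlast, hes, hre⟩
  exact hes (sources_mem_of_pathTo hS hp hw e (getLast_mem_of_getLast? hlast))

lemma flowsTo_cons {e : E} {l : List E} (h : FlowsTo s r S (r e) l) :
    FlowsTo s r S (s e) (e :: l) := by
  obtain ⟨⟨u, hp⟩, f, hlast, hf1, hf2⟩ := h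
  refine ⟨⟨u, PathTo.cons e hp⟩, f, ?_, hf1, hf2⟩
  cases l with
  | nil => simp at hlast
  | cons a t => rw [List.getLast?_cons_cons]; exact hlast

lemma flowsTo_single {e : E} (h1 : s e ∉ S) (h2 : r e ∈ S) : FlowsTo s r S (s e) [e] :=
  ⟨⟨r e, PathTo.cons e (PathTo.nil _)⟩, e, rfl, h1, h2⟩

lemma flowsTo_cons_inv (hS : Hereditary s r S) {v : V} {e : E} {l : List E}
    (h : FlowsTo s r S v (e :: l)) :
    s e = v ∧ ((l = [] ∧ s e ∉ S ∧ r e ∈ S) ∨ (l ≠ [] ∧ r e ∉ S ∧ FlowsTo s r S (r e) l)) := by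
  obtain ⟨⟨u, hp⟩, f, hlast, hf1, hf2⟩ := h
  obtain ⟨hse, hp'⟩ := pathTo_cons_inv hp
  refine ⟨hse, ?_⟩
  cases l with
  | nil =>
    left
    simp only [List.getLast?_singleton, Option.some.injEq] at hlast
    subst hlast
    exact ⟨rfl, hf1, hf2⟩
  | cons a t =>
    right
    rw [List.getLast?_cons_cons] at hlast
    have hfl : FlowsTo s r S (r e) (a :: t) := ⟨⟨u, hp'⟩, f, hlast, hf1, hf2⟩
    refine ⟨by simp, ?_, hfl⟩
    intro hre
    exact hf1 (sources_mem_of_pathTo hS hp' hre f (getLast_mem_of_getLast? hlast))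

end Flows
end Tal19
namespace Tal19
variable {V E : Type*} {s r : E → V} {hrow : ∀ v : V, {e : E | s e = v}.Finite}

section Weight

open Classical in
/-- Weight of a vertex: number of flow paths into `S` (at least 1, `⊤` if infinite). -/
noncomputable def gwt (s r : E → V) (S : Set V) (w : V) : ℕ∞ :=
  if h : {l : List E | FlowsTo s r S w l}.Finite then max (h.toFinset.card : ℕ∞) 1 else ⊤

variable {S : Set V}

lemma one_le_gwt (w : V) : 1 ≤ gwt s r S w := by
  unfold gwt
  split
  · exact le_max_right _ _
  · exact le_top

lemma gwt_eq_one_of_mem (hS : Hereditary s r S) {w : V} (hw : w ∈ S) : gwt s r S w = 1 := by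
  have hemp : {l : List E | FlowsTo s r S w l} = ∅ := flows_empty_of_mem hS hw
  unfold gwt
  rw [dif_pos (by rw [hemp]; exact Set.finite_empty)]
  have h2 : ∀ (h : {l : List E | FlowsTo s r S w l}.Finite), h.toFinset = ∅ :=
    fun h => Set.Finite.toFinset_eq_empty.mpr hemp
  rw [h2]
  simp

lemma flows_finite_of_gwt_ne_top {w : V} (h : gwt s r S w ≠ ⊤) :
    {l : List E | FlowsTo s r S w l}.Finite := by
  unfold gwt at h
  by_contra hinf
  rw [dif_neg hinf] at h
  exact h rfl

lemma gwt_le_card {w : V} (h : {l : List E | FlowsTo s r S w l}.Finite) (n : ℕ)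
    (hc : h.toFinset.card ≤ n) (hn : 1 ≤ n) : gwt s r S w ≤ (n : ℕ∞) := by
  unfold gwt
  rw [dif_pos h]
  exact max_le (by exact_mod_cast hc) (by exact_mod_cast hn)

lemma gwt_le_sum (hS : Hereditary s r S) {v : V} (hv : ∃ e, s e = v) :
    gwt s r S v ≤ ∑ e ∈ (hrow v).toFinset, gwt s r S (r e) := by
  classical
  obtain ⟨e₀, he₀⟩ := hv
  have he₀m : e₀ ∈ (hrow v).toFinset := by simp [he₀]
  have hone : (1 : ℕ∞) ≤ ∑ e ∈ (hrow v).toFinset, gwt s r S (r e) :=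
    le_trans (one_le_gwt (r e₀))
      (Finset.single_le_sum (f := fun e => gwt s r S (r e)) (fun i _ => zero_le) he₀m)
  by_cases hfin : ∀ e ∈ (hrow v).toFinset, ({l : List E | FlowsTo s r S (r e) l}).Finite
  · set Fn : E → Finset (List E) := fun e =>
      if h : ({l : List E | FlowsTo s r S (r e) l}).Finite then h.toFinset else ∅ with hFn
    set B : E → Finset (List E) := fun e =>
      if r e ∈ S then {[e]} else (Fn e).image (e :: ·) with hB
    have hsub : {l : List E | FlowsTo s r S v l} ⊆ ↑((hrow v).toFinset.biUnion B) := by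
      intro l hl
      cases l with
      | nil => exact absurd rfl (flowsTo_ne_nil hl)
      | cons e t =>
        obtain ⟨hse, hcase⟩ := flowsTo_cons_inv hS hl
        have hem : e ∈ (hrow v).toFinset := by simp [hse]
        rw [Finset.coe_biUnion]
        refine Set.mem_biUnion hem ?_
        rcases hcase with ⟨rfl, _, hre⟩ | ⟨_, hre, hfl⟩
        · simp [hB, hre]
        · simp only [hB, if_neg hre, Finset.coe_image, Finset.mem_coe]
          refine Set.mem_image_of_mem _ ?_
          simp only [hFn, dif_pos (hfin e hem)]
          exact (Set.Finite.mem_toFinset _).mpr hfl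
    have hvfin : {l : List E | FlowsTo s r S v l}.Finite :=
      Set.Finite.subset (Finset.finite_toSet _) hsub
    have hcard1 : hvfin.toFinset.card ≤ ((hrow v).toFinset.biUnion B).card := by
      apply Finset.card_le_card
      intro l hl
      exact hsub ((Set.Finite.mem_toFinset _).mp hl)
    have hcard2 : (((hrow v).toFinset.biUnion B).card : ℕ∞) ≤
        ∑ e ∈ (hrow v).toFinset, gwt s r S (r e) := by
      calc (((hrow v).toFinset.biUnion B).card : ℕ∞)
          ≤ ((∑ e ∈ (hrow v).toFinset, (B e).card : ℕ) : ℕ∞) := by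
            exact_mod_cast Finset.card_biUnion_le
        _ = ∑ e ∈ (hrow v).toFinset, ((B e).card : ℕ∞) := by
            exact_mod_cast Nat.cast_sum _ _
        _ ≤ ∑ e ∈ (hrow v).toFinset, gwt s r S (r e) := by
            refine Finset.sum_le_sum fun e he => ?_
            by_cases hre : r e ∈ S
            · rw [hB]
              simp only [if_pos hre, Finset.card_singleton, Nat.cast_one]
              rw [gwt_eq_one_of_mem hS hre]
            · rw [hB]
              simp only [if_neg hre]
              calc (((Fn e).image (e :: ·)).card : ℕ∞) ≤ ((Fn e).card : ℕ∞) := by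
                    exact_mod_cast Finset.card_image_le
                _ ≤ gwt s r S (r e) := by
                    unfold gwt
                    rw [dif_pos (hfin e he), hFn]
                    simp only [dif_pos (hfin e he)]
                    exact le_max_left _ _
    have hfinal : gwt s r S v = max (hvfin.toFinset.card : ℕ∞) 1 := by
      unfold gwt
      rw [dif_pos hvfin]
    rw [hfinal]
    exact max_le (le_trans (by exact_mod_cast hcard1) hcard2) hone
  · push_neg at hfin
    obtain ⟨e, hem, hinf⟩ := hfin
    have htop : gwt s r S (r e) = ⊤ := by unfold gwt; rw [dif_neg hinf]
    calc gwt s r S v ≤ ⊤ := le_top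
      _ = gwt s r S (r e) := htop.symm
      _ ≤ _ := Finset.single_le_sum (f := fun e => gwt s r S (r e)) (fun i _ => zero_le) hem

end Weight
end Tal19
namespace Tal19
variable {V E : Type*} {s r : E → V} {hrow : ∀ v : V, {e : E | s e = v}.Finite}

section WtC
variable {S : Set V}

noncomputable def wtC (s r : E → V) (S : Set V) (x : FreeTal V) : ℕ∞ :=
  x.sum fun p n => (n : ℕ∞) * gwt s r S p.1

lemma wtC_add (x y : FreeTal V) : wtC s r S (x + y) = wtC s r S x + wtC s r S y :=
  Finsupp.sum_add_index' (by simp) (fun p n m => by push_cast; ring)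

lemma wtC_single (p : V × ℤ) (n : ℕ) :
    wtC s r S (Finsupp.single p n) = (n : ℕ∞) * gwt s r S p.1 := by
  classical
  exact Finsupp.sum_single_index (by simp)

lemma wtC_finset_sum {ι : Type*} (t : Finset ι) (f : ι → FreeTal V) :
    wtC s r S (∑ e ∈ t, f e) = ∑ e ∈ t, wtC s r S (f e) := by
  classical
  induction t using Finset.induction with
  | empty => simp [wtC]
  | insert a t' hx ih => simp [Finset.sum_insert hx, wtC_add, ih]

lemma wtC_expand (v : V) (i : ℤ) :
    wtC s r S (expand s r hrow v i) = ∑ e ∈ (hrow v).toFinset, gwt s r S (r e) := by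
  unfold expand
  rw [wtC_finset_sum]
  refine Finset.sum_congr rfl fun e _ => ?_
  rw [wtC_single]
  simp

lemma step_wtC_le (hS : Hereditary s r S) {x y : FreeTal V} (h : Step s r hrow x y) :
    wtC s r S x ≤ wtC s r S y := by
  obtain ⟨v, i, z, hv, rfl, rfl⟩ := h
  rw [wtC_add, wtC_add, wtC_single, wtC_expand]
  simp only [Nat.cast_one, one_mul]
  exact add_le_add (gwt_le_sum hS hv) le_rfl

lemma steps_wtC_le (hS : Hereditary s r S) {x y : FreeTal V} (h : Steps s r hrow x y) :
    wtC s r S x ≤ wtC s r S y := by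
  induction h with
  | refl => exact le_rfl
  | tail _ h ih => exact le_trans ih (step_wtC_le hS h)

lemma wtC_eq_deg_of_suppIn (hS : Hereditary s r S) {z : FreeTal V} (hz : SuppIn S z) :
    wtC s r S z = (deg z : ℕ∞) := by
  unfold wtC deg
  rw [show (Finsupp.sum z fun p n => (n : ℕ∞) * gwt s r S p.1)
      = Finsupp.sum z fun p n => (n : ℕ∞) from ?_]
  · unfold Finsupp.sum
    rw [Nat.cast_sum]
  · refine Finsupp.sum_congr fun p hp => ?_
    rw [gwt_eq_one_of_mem hS (hz p (Finsupp.mem_support_iff.mp hp)), mul_one]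

lemma flows_finite_of_steps (hS : Hereditary s r S) {v : V} {i : ℤ} {z : FreeTal V}
    (h : Steps s r hrow (Finsupp.single ((v, i) : V × ℤ) 1) z) (hz : SuppIn S z) :
    {l : List E | FlowsTo s r S v l}.Finite := by
  have h1 : gwt s r S v ≤ (deg z : ℕ∞) := by
    have := steps_wtC_le hS h
    rwa [wtC_single, Nat.cast_one, one_mul, wtC_eq_deg_of_suppIn hS hz] at this
  refine flows_finite_of_gwt_ne_top fun htop => ?_
  rw [htop] at h1
  exact (ENat.coe_ne_top (deg z)) (top_le_iff.mp h1)

lemma expand_apply_ge {v : V} {i : ℤ} {e : E} (he : e ∈ (hrow v).toFinset) :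
    1 ≤ expand s r hrow v i (r e, i + 1) := by
  classical
  unfold expand
  rw [Finsupp.finset_sum_apply]
  have : (Finsupp.single ((r e, i + 1) : V × ℤ) 1) (r e, i + 1) = 1 := by simp
  calc (1 : ℕ) = (Finsupp.single ((r e, i + 1) : V × ℤ) 1) (r e, i + 1) := this.symm
    _ ≤ _ := Finset.single_le_sum (f := fun f => (Finsupp.single ((r f, i + 1) : V × ℤ) 1) (r e, i + 1))
        (fun _ _ => Nat.zero_le _) he

lemma flows_nonempty_of_steps (_hS : Hereditary s r S) {x z : FreeTal V}
    (h : Steps s r hrow x z) (hz : SuppIn S z) :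
    ∀ p : V × ℤ, x p ≠ 0 → p.1 ∉ S → {l : List E | FlowsTo s r S p.1 l}.Nonempty := by
  induction h using Relation.ReflTransGen.head_induction_on with
  | refl => exact fun p hp hps => absurd (hz p hp) hps
  | head hstep hsteps ih =>
    intro p hp hps
    obtain ⟨v, i, z0, hv, hx, hnext⟩ := hstep
    by_cases hz0 : z0 p = 0
    · have hpv : p = ((v, i) : V × ℤ) := by
        have h5 : (Finsupp.single ((v, i) : V × ℤ) 1) p ≠ 0 := by
          rw [hx] at hp
          simp only [Finsupp.coe_add, Pi.add_apply] at hp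
          omega
        exact (Finsupp.single_apply_ne_zero.mp h5).1
      subst hpv
      obtain ⟨e₀, he₀⟩ := hv
      have he₀m : e₀ ∈ (hrow v).toFinset := by simp [he₀]
      simp only at hps
      by_cases hre : r e₀ ∈ S
      · exact ⟨[e₀], by have := flowsTo_single (S := S) (e := e₀) (he₀ ▸ hps) hre; rwa [he₀] at this⟩
      · have hb : (expand s r hrow v i + z0) ((r e₀, i + 1) : V × ℤ) ≠ 0 := by
          have := expand_apply_ge (r := r) (i := i) he₀m
          simp only [Finsupp.coe_add, Pi.add_apply]
          omega
        rw [hnext] at ih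
        obtain ⟨l, hl⟩ := ih ((r e₀, i + 1) : V × ℤ) hb hre
        exact ⟨e₀ :: l, by have := flowsTo_cons hl; rwa [he₀] at this⟩
    · refine ih p ?_ hps
      rw [hnext]
      simp only [Finsupp.coe_add, Pi.add_apply]
      omega

end WtC
end Tal19
namespace Tal19
variable {V E : Type*} {s r : E → V} {hrow : ∀ v : V, {e : E | s e = v}.Finite}

lemma suppIn_zero (S : Set V) : SuppIn S (0 : FreeTal V) := fun p hp => by simp at hp

lemma suppIn_mono {S T : Set V} (h : S ⊆ T) {x : FreeTal V} (hx : SuppIn S x) : SuppIn T x :=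
  fun p hp => h (hx p hp)

lemma suppIn_single {S : Set V} {p : V × ℤ} (h : p.1 ∈ S) (n : ℕ) :
    SuppIn S (Finsupp.single p n) := by
  intro q hq
  obtain ⟨rfl, -⟩ := Finsupp.single_apply_ne_zero.mp hq
  exact h

lemma steps_finset_sum {ι : Type*} (t : Finset ι) (f g : ι → FreeTal V)
    (h : ∀ e ∈ t, Steps s r hrow (f e) (g e)) :
    Steps s r hrow (∑ e ∈ t, f e) (∑ e ∈ t, g e) := by
  classical
  induction t using Finset.induction with
  | empty => simp; exact .refl
  | insert a t' hx ih =>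
    rw [Finset.sum_insert hx, Finset.sum_insert hx]
    exact steps_add (h a (Finset.mem_insert_self a t'))
      (ih fun e he => h e (Finset.mem_insert_of_mem he))

lemma suppIn_finset_sum {S : Set V} {ι : Type*} (t : Finset ι) (f : ι → FreeTal V)
    (h : ∀ e ∈ t, SuppIn S (f e)) : SuppIn S (∑ e ∈ t, f e) := by
  classical
  induction t using Finset.induction with
  | empty => simpa using suppIn_zero S
  | insert a t' hx ih =>
    rw [Finset.sum_insert hx]
    exact suppIn_add (h a (Finset.mem_insert_self a t'))
      (ih fun e he => h e (Finset.mem_insert_of_mem he))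

/-- Full expansion into `S` under the flow condition. -/
lemma exists_expansion {S : Set V} (hS : Hereditary s r S)
    (hflow : ∀ v : V, v ∉ S →
      ({l : List E | FlowsTo s r S v l}.Finite ∧ {l : List E | FlowsTo s r S v l}.Nonempty)) :
    ∀ (v : V), v ∉ S → ∀ i : ℤ,
      ∃ z, Steps s r hrow (Finsupp.single ((v, i) : V × ℤ) 1) z ∧ SuppIn S z := by
  classical
  suffices key : ∀ (n : ℕ) (v : V) (hv : v ∉ S), (hflow v hv).1.toFinset.sup List.length ≤ n →
      ∀ i : ℤ, ∃ z, Steps s r hrow (Finsupp.single ((v, i) : V × ℤ) 1) z ∧ SuppIn S z by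
    exact fun v hv i => key _ v hv le_rfl i
  intro n
  induction n using Nat.strong_induction_on with
  | _ n ih =>
    intro v hv hM i
    -- v is regular
    obtain ⟨l₀, hl₀⟩ := (hflow v hv).2
    obtain ⟨e₁, t₁, rfl⟩ : ∃ e t, l₀ = e :: t := by
      cases l₀ with
      | nil => exact absurd rfl (flowsTo_ne_nil hl₀)
      | cons e t => exact ⟨e, t, rfl⟩
    have hreg : ∃ e, s e = v := ⟨e₁, (flowsTo_cons_inv hS hl₀).1⟩
    -- the first step
    have hstep : Step s r hrow (Finsupp.single ((v, i) : V × ℤ) 1) (expand s r hrow v i) :=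
      ⟨v, i, 0, hreg, by simp, by simp⟩
    -- M v ≥ 1
    have hM1 : 1 ≤ (hflow v hv).1.toFinset.sup List.length := by
      have hmem : (e₁ :: t₁) ∈ (hflow v hv).1.toFinset := (Set.Finite.mem_toFinset _).mpr hl₀
      calc 1 ≤ (e₁ :: t₁).length := by simp
        _ ≤ _ := Finset.le_sup hmem
    -- expand each outgoing edge
    have hchoice : ∀ e, e ∈ (hrow v).toFinset →
        ∃ z, Steps s r hrow (Finsupp.single ((r e, i + 1) : V × ℤ) 1) z ∧ SuppIn S z := by
      intro e hem
      have hse : s e = v := by simpa using (Set.Finite.mem_toFinset _).mp hem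
      by_cases hre : r e ∈ S
      · exact ⟨Finsupp.single ((r e, i + 1) : V × ℤ) 1, .refl, suppIn_single hre 1⟩
      · -- M (r e) < M v
        have hMlt : (hflow (r e) hre).1.toFinset.sup List.length
            < (hflow v hv).1.toFinset.sup List.length := by
          have hle : (hflow (r e) hre).1.toFinset.sup List.length + 1
              ≤ (hflow v hv).1.toFinset.sup List.length := by
            obtain ⟨lm, hlm, hlen⟩ : ∃ lm ∈ (hflow (r e) hre).1.toFinset,
                (hflow (r e) hre).1.toFinset.sup List.length = lm.length := by
              obtain ⟨lm, hlm⟩ := (hflow (r e) hre).2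
              exact Finset.exists_mem_eq_sup _ ⟨lm, (Set.Finite.mem_toFinset _).mpr hlm⟩ _
            have hflm : FlowsTo s r S (r e) lm := by
              have h9 := (Set.Finite.mem_toFinset (hflow (r e) hre).1).mp hlm
              exact h9
            have hcons : FlowsTo s r S v (e :: lm) := by
              have := flowsTo_cons hflm
              rwa [hse] at this
            have hmem : (e :: lm) ∈ (hflow v hv).1.toFinset :=
              (Set.Finite.mem_toFinset _).mpr hcons
            calc (hflow (r e) hre).1.toFinset.sup List.length + 1 = (e :: lm).length := by
                  simp [hlen]
              _ ≤ _ := Finset.le_sup hmem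
          omega
        exact ih _ (lt_of_lt_of_le hMlt hM) (r e) hre le_rfl (i + 1)
    choose! zf hzf1 hzf2 using hchoice
    refine ⟨∑ e ∈ (hrow v).toFinset, zf e, ?_, ?_⟩
    · refine Relation.ReflTransGen.trans (.single hstep) ?_
      unfold expand
      exact steps_finset_sum _ _ _ fun e he => hzf1 e he
    · exact suppIn_finset_sum _ _ fun e he => hzf2 e he

end Tal19
namespace Tal19
variable {V E : Type*} {s r : E → V} {hrow : ∀ v : V, {e : E | s e = v}.Finite}

lemma hereditary_union {H K : Set V} (hH : Hereditary s r H) (hK : Hereditary s r K) :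
    Hereditary s r (H ∪ K) := fun e he =>
  he.elim (fun h => Or.inl (hH e h)) (fun h => Or.inr (hK e h))

section Main
variable (s r hrow)

lemma vertexSet_hereditary {I : Set (TalMon s r hrow)} (hI : IsZOrderIdeal s r hrow I) :
    Hereditary s r {v | talGen s r hrow (v, 0) ∈ I} := by
  classical
  intro e hse
  have hreg : ∃ f, s f = s e := ⟨e, rfl⟩
  have hexp := talGen_expand s r hrow (0 : ℤ) hreg
  have hem : e ∈ (hrow (s e)).toFinset := by simp
  have hle : AlgLE (talGen s r hrow (r e, (0 : ℤ) + 1)) (talGen s r hrow (s e, 0)) := by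
    rw [hexp]
    exact ⟨∑ f ∈ ((hrow (s e)).toFinset).erase e, talGen s r hrow (r f, 0 + 1),
      (Finset.add_sum_erase _ _ hem).symm⟩
  have h1 : talGen s r hrow (r e, (0 : ℤ) + 1) ∈ I := hI.2.2.1 _ _ hse hle
  have h2 := hI.2.2.2 (-1) _ h1
  rw [shiftTal_talGen] at h2
  simpa using h2

lemma vertexSet_saturated {I : Set (TalMon s r hrow)} (hI : IsZOrderIdeal s r hrow I) :
    Saturated s r {v | talGen s r hrow (v, 0) ∈ I} := by
  intro v hreg hall
  have hexp := talGen_expand s r hrow (0 : ℤ) hreg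
  show talGen s r hrow (v, 0) ∈ I
  rw [hexp]
  refine ideal_sum_mem s r hrow hI _ _ fun e he => ?_
  have hse : s e = v := by simpa using (Set.Finite.mem_toFinset _).mp he
  have h1 : talGen s r hrow (r e, (0 : ℤ)) ∈ I := hall e hse
  have h2 := hI.2.2.2 1 _ h1
  rw [shiftTal_talGen] at h2
  simpa using h2

lemma vertexSet_nonempty {I : Set (TalMon s r hrow)} (hI : IsZOrderIdeal s r hrow I)
    (hne : I ≠ {0}) : {v | talGen s r hrow (v, 0) ∈ I}.Nonempty := by
  obtain ⟨a, haI, ha0⟩ : ∃ a ∈ I, a ≠ 0 := by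
    by_contra h
    push_neg at h
    exact hne (Set.eq_singleton_iff_unique_mem.mpr ⟨hI.1, fun a ha => h a ha⟩)
  obtain ⟨x, rfl⟩ := AddCon.mk'_surjective a
  have hx0 : x ≠ 0 := fun h => ha0 (by rw [h, map_zero])
  obtain ⟨p, hp⟩ : ∃ p, x p ≠ 0 := by
    by_contra h
    push_neg at h
    exact hx0 (Finsupp.ext fun p => by simpa using h p)
  exact ⟨p.1, suppIn_vertexSet_of_mem s r hrow hI haI p hp⟩

lemma forward_flow {I J : Set (TalMon s r hrow)} (hI : IsZOrderIdeal s r hrow I)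
    (hJ : IsZOrderIdeal s r hrow J)
    (hdec : ∀ x : TalMon s r hrow, ∃ a ∈ I, ∃ b ∈ J, x = a + b) :
    ∀ v : V, v ∉ ({v | talGen s r hrow (v, 0) ∈ I} ∪ {v | talGen s r hrow (v, 0) ∈ J}) →
      ({l : List E | FlowsTo s r ({v | talGen s r hrow (v, 0) ∈ I} ∪
          {v | talGen s r hrow (v, 0) ∈ J}) v l}.Finite ∧
        {l : List E | FlowsTo s r ({v | talGen s r hrow (v, 0) ∈ I} ∪
          {v | talGen s r hrow (v, 0) ∈ J}) v l}.Nonempty) := by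
  intro v hv
  have hS : Hereditary s r ({v | talGen s r hrow (v, 0) ∈ I} ∪
      {v | talGen s r hrow (v, 0) ∈ J}) :=
    hereditary_union (vertexSet_hereditary s r hrow hI) (vertexSet_hereditary s r hrow hJ)
  obtain ⟨a, haI, b, hbJ, hab⟩ := hdec (talGen s r hrow (v, 0))
  obtain ⟨xa, rfl⟩ := AddCon.mk'_surjective a
  obtain ⟨xb, rfl⟩ := AddCon.mk'_surjective b
  have hcon : (talCon s r hrow).mk' (Finsupp.single ((v, 0) : V × ℤ) 1) =
      (talCon s r hrow).mk' (xa + xb) := by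
    rw [map_add]
    exact hab
  obtain ⟨z, h1, h2⟩ := (mk_eq_mk s r hrow).mp hcon
  have hzS : SuppIn ({v | talGen s r hrow (v, 0) ∈ I} ∪ {v | talGen s r hrow (v, 0) ∈ J}) z :=
    steps_suppIn hS h2 (suppIn_add
      (suppIn_mono Set.subset_union_left (suppIn_vertexSet_of_mem s r hrow hI haI))
      (suppIn_mono Set.subset_union_right (suppIn_vertexSet_of_mem s r hrow hJ hbJ)))
  exact ⟨flows_finite_of_steps hS h1 hzS,
    flows_nonempty_of_steps hS h1 hzS ((v, 0) : V × ℤ) (by simp) hv⟩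

lemma suppIn_list_sum {H : Set V} {l : List (V × ℤ)} (h : ∀ p ∈ l, p.1 ∈ H) :
    SuppIn H ((l.map fun p => Finsupp.single p 1).sum : FreeTal V) := by
  induction l with
  | nil => simpa using suppIn_zero H
  | cons p t ih =>
    simp only [List.map_cons, List.sum_cons]
    exact suppIn_add (suppIn_single (h p (by simp)) 1) (ih fun q hq => h q (by simp [hq]))

lemma genIdeal_inter {H K : Set V} (hH : Hereditary s r H) (hK : Hereditary s r K)
    (hHK : H ∩ K = ∅) :
    genIdeal s r hrow H ∩ genIdeal s r hrow K = {0} := by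
  apply Set.eq_singleton_iff_unique_mem.mpr
  refine ⟨⟨(genIdeal_isIdeal s r hrow H).1, (genIdeal_isIdeal s r hrow K).1⟩, ?_⟩
  rintro a ⟨⟨lH, hlH, haH⟩, ⟨lK, hlK, haK⟩⟩
  obtain ⟨x, rfl⟩ := AddCon.mk'_surjective a
  rw [← mk_list_sum s r hrow] at haH haK
  obtain ⟨x1, z1, hx1, hy1, d1, rfl⟩ := algLE_mk_iff.mp haH
  obtain ⟨x2, z2, hx2, hy2, d2, rfl⟩ := algLE_mk_iff.mp haK
  have hx1H : SuppIn H x1 :=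
    suppIn_of_add_left (steps_suppIn hH hy1 (suppIn_list_sum hlH))
  have hx2K : SuppIn K x2 :=
    suppIn_of_add_left (steps_suppIn hK hy2 (suppIn_list_sum hlK))
  obtain ⟨w, hw1, hw2⟩ := steps_confl hx1 hx2
  have hwH : SuppIn H w := steps_suppIn hH hw1 hx1H
  have hwK : SuppIn K w := steps_suppIn hK hw2 hx2K
  have hw0 : w = 0 := by
    ext p
    simp only [Finsupp.coe_zero, Pi.zero_apply]
    by_contra hp
    have hmem : p.1 ∈ H ∩ K := ⟨hwH p hp, hwK p hp⟩
    rw [hHK] at hmem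
    exact hmem
  have hx0 : deg x = 0 := by
    have h1 := steps_deg_le (hx1.trans hw1)
    rw [hw0] at h1
    have h2 : deg (0 : FreeTal V) = 0 := deg_eq_zero.mpr rfl
    omega
  rw [deg_eq_zero.mp hx0, map_zero]

lemma genIdeal_ne_zero {H : Set V} (hne : H.Nonempty) : genIdeal s r hrow H ≠ {0} := by
  obtain ⟨v, hv⟩ := hne
  intro h
  have hmem := talGen_mem_genIdeal s r hrow hv 0
  rw [h] at hmem
  exact talGen_ne_zero s r hrow (v, 0) (Set.mem_singleton_iff.mp hmem)

lemma single_decomp {H K : Set V} (hH : Hereditary s r H) (hK : Hereditary s r K)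
    (hflow : ∀ v : V, v ∉ H ∪ K →
      ({l : List E | FlowsTo s r (H ∪ K) v l}.Finite ∧
        {l : List E | FlowsTo s r (H ∪ K) v l}.Nonempty)) (p : V × ℤ) :
    ∃ a ∈ genIdeal s r hrow H, ∃ b ∈ genIdeal s r hrow K,
      (talCon s r hrow).mk' (Finsupp.single p 1) = a + b := by
  classical
  by_cases hpH : p.1 ∈ H
  · exact ⟨talGen s r hrow p, talGen_mem_genIdeal s r hrow hpH p.2, 0,
      (genIdeal_isIdeal s r hrow K).1, (add_zero _).symm⟩
  by_cases hpK : p.1 ∈ K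
  · exact ⟨0, (genIdeal_isIdeal s r hrow H).1, talGen s r hrow p,
      talGen_mem_genIdeal s r hrow hpK p.2, (zero_add _).symm⟩
  have hv : p.1 ∉ H ∪ K := by
    rintro (h | h)
    exacts [hpH h, hpK h]
  obtain ⟨z, h1, hzS⟩ := exists_expansion (hereditary_union hH hK) hflow p.1 hv p.2
  set zH := z.filter (fun q : V × ℤ => q.1 ∈ H) with hzH
  set zK := z.filter (fun q : V × ℤ => ¬ q.1 ∈ H) with hzK
  have hsplit : zH + zK = z := Finsupp.filter_pos_add_filter_neg z _
  have hzHsupp : SuppIn H zH := by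
    intro q hq
    rw [hzH, Finsupp.filter_apply] at hq
    by_cases h : q.1 ∈ H
    · exact h
    · rw [if_neg h] at hq
      exact absurd rfl hq
  have hzKsupp : SuppIn K zK := by
    intro q hq
    rw [hzK, Finsupp.filter_apply] at hq
    by_cases h : ¬ q.1 ∈ H
    · rw [if_pos h] at hq
      rcases hzS q hq with hh | hh
      · exact absurd hh h
      · exact hh
    · rw [if_neg h] at hq
      exact absurd rfl hq
  refine ⟨(talCon s r hrow).mk' zH, mem_genIdeal_of_suppIn s r hrow hzHsupp,
    (talCon s r hrow).mk' zK, mem_genIdeal_of_suppIn s r hrow hzKsupp, ?_⟩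
  rw [← map_add, hsplit]
  exact steps_mk s r hrow h1

lemma decomp_all {H K : Set V} (hH : Hereditary s r H) (hK : Hereditary s r K)
    (hflow : ∀ v : V, v ∉ H ∪ K →
      ({l : List E | FlowsTo s r (H ∪ K) v l}.Finite ∧
        {l : List E | FlowsTo s r (H ∪ K) v l}.Nonempty)) :
    ∀ x : TalMon s r hrow,
      ∃ a ∈ genIdeal s r hrow H, ∃ b ∈ genIdeal s r hrow K, x = a + b := by
  intro x
  obtain ⟨x₀, rfl⟩ := AddCon.mk'_surjective x
  obtain ⟨l, hl, -⟩ := exists_list_rep x₀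
  rw [show x₀ = ((l.map fun p => Finsupp.single p 1).sum : FreeTal V) from hl]
  clear hl
  induction l with
  | nil =>
    exact ⟨0, (genIdeal_isIdeal s r hrow H).1, 0, (genIdeal_isIdeal s r hrow K).1, by simp⟩
  | cons p t ih =>
    obtain ⟨a1, ha1, b1, hb1, h1⟩ := single_decomp s r hrow hH hK hflow p
    obtain ⟨a2, ha2, b2, hb2, h2⟩ := ih
    refine ⟨a1 + a2, (genIdeal_isIdeal s r hrow H).2.1 _ _ ha1 ha2,
      b1 + b2, (genIdeal_isIdeal s r hrow K).2.1 _ _ hb1 hb2, ?_⟩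
    rw [List.map_cons, List.sum_cons, map_add, h1, h2]
    abel

end Main
end Tal19
open Tal19 in
theorem stmt_19 {V E : Type*} (s r : E → V)
    (hrow : ∀ v : V, {e : E | s e = v}.Finite) :
    (∃ I J : Set (TalMon s r hrow),
        IsZOrderIdeal s r hrow I ∧ IsZOrderIdeal s r hrow J ∧
        I ≠ {0} ∧ J ≠ {0} ∧
        (∀ x : TalMon s r hrow, ∃ a ∈ I, ∃ b ∈ J, x = a + b) ∧ I ∩ J = {0}) ↔
      (∃ H K : Set V,
        Hereditary s r H ∧ Saturated s r H ∧ Hereditary s r K ∧ Saturated s r K ∧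
        H.Nonempty ∧ K.Nonempty ∧ H ∩ K = ∅ ∧
        ∀ v : V, v ∉ H ∪ K →
          ({l : List E | FlowsTo s r (H ∪ K) v l}.Finite ∧
            {l : List E | FlowsTo s r (H ∪ K) v l}.Nonempty)) := by
  constructor
  · rintro ⟨I, J, hI, hJ, hInt, hJnt, hdec, hIJ⟩
    refine ⟨{v | talGen s r hrow (v, 0) ∈ I}, {v | talGen s r hrow (v, 0) ∈ J},
      vertexSet_hereditary s r hrow hI, vertexSet_saturated s r hrow hI,
      vertexSet_hereditary s r hrow hJ, vertexSet_saturated s r hrow hJ,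
      vertexSet_nonempty s r hrow hI hInt, vertexSet_nonempty s r hrow hJ hJnt, ?_,
      forward_flow s r hrow hI hJ hdec⟩
    ext v
    simp only [Set.mem_inter_iff, Set.mem_setOf_eq, Set.mem_empty_iff_false, iff_false]
    rintro ⟨h1, h2⟩
    have hmem : talGen s r hrow (v, 0) ∈ I ∩ J := ⟨h1, h2⟩
    rw [hIJ] at hmem
    exact talGen_ne_zero s r hrow (v, 0) (Set.mem_singleton_iff.mp hmem)
  · rintro ⟨H, K, hH, _, hK, _, hHne, hKne, hHK, hflow⟩
    exact ⟨genIdeal s r hrow H, genIdeal s r hrow K,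
      genIdeal_isIdeal s r hrow H, genIdeal_isIdeal s r hrow K,
      genIdeal_ne_zero s r hrow hHne, genIdeal_ne_zero s r hrow hKne,
      decomp_all s r hrow hH hK hflow, genIdeal_inter s r hrow hH hK hHK⟩
end
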